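/- For all compositions λ and μ, the quasi-shuffle coefficient c^μ_{(1),λ} of the one-part composition (1) with λ equals the edge multiplicity κ(λ,μ) of the Gnedin–Kingman graph (in particular it vanishes unless |μ| = |λ|+1). Equivalently, the Pieri rule M_{(1)}·M_λ = Σ_μ κ(λ,μ)·M_μ holds for monomial quasisymmetric functions. -/

import Mathlib

open scoped ENNReal NNReal

namespace GK

/-! ## The Gnedin–Kingman graph -/

/-- Decrement (if the part is ≥ 2) or delete (otherwise) the part of `μ` at position `p`. -/
def stepAt (μ : List ℕ) (p : ℕ) : List ℕ :=
  if 2 ≤ μ.getD p 0 then μ.set p (μ.getD p 0 - 1) else μ.eraseIdx p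

/-- Edge multiplicity `κ(ν,μ)` of the Gnedin–Kingman graph: the number of positions of `μ`
at which decrementing a part ≥ 2 (or deleting a part equal to 1) produces `ν`. -/
def kappa (ν μ : List ℕ) : ℕ :=
  ((Finset.range μ.length).filter fun p => stepAt μ p = ν).card

/-- `ν ↗ μ`. -/
def Rel (ν μ : List ℕ) : Prop := 0 < kappa ν μ

def IsComposition (l : List ℕ) : Prop := ∀ n ∈ l, 0 < n

/-- Compositions: finite lists of positive integers. -/
abbrev Comp := {l : List ℕ // IsComposition l}

/-- The empty composition ∅. -/
def cEmpty : Comp := ⟨[], fun _ h => nomatch h⟩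

/-- Harmonicity, for `[0,∞]`-valued functions on the Gnedin–Kingman graph
(with the conventions `0·∞ = 0` and `x + ∞ = ∞` of `ℝ≥0∞`). -/
def HarmonicE (φ : Comp → ℝ≥0∞) : Prop :=
  ∀ l : Comp, φ l = ∑' μ : Comp, (kappa l.1 μ.1 : ℝ≥0∞) * φ μ

/-- Harmonicity, for real-valued functions. -/
def HarmonicR (φ : Comp → ℝ) : Prop :=
  ∀ l : Comp, φ l = ∑' μ : Comp, (kappa l.1 μ.1 : ℝ) * φ μ

/-- A finite harmonic function: real-valued (hence finite), nonnegative, harmonic. -/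
def FiniteHarmonic (φ : Comp → ℝ) : Prop :=
  HarmonicR φ ∧ ∀ l, 0 ≤ φ l

/-- The quasi-shuffle coefficient `c^γ_{α,β}`: the number of pairs of strictly increasing
maps `f, g` into the positions of `γ` which jointly cover all positions of `γ` and such that
each part of `γ` is the sum of the corresponding parts of `α` and `β`. -/
noncomputable def qsCoeff (α β γ : List ℕ) : ℕ :=
  Nat.card {fg : (Fin α.length → Fin γ.length) × (Fin β.length → Fin γ.length) //
    StrictMono fg.1 ∧ StrictMono fg.2 ∧
    (∀ s, (∃ i, fg.1 i = s) ∨ (∃ j, fg.2 j = s)) ∧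
    ∀ s : Fin γ.length,
      γ.get s = (∑ i, if fg.1 i = s then α.get i else 0) +
                (∑ j, if fg.2 j = s then β.get j else 0)}

/-- Indecomposability of a finite harmonic function normalized at ∅. -/
def IndecFin (φ : Comp → ℝ) : Prop :=
  ∀ φ₁ φ₂ : Comp → ℝ, FiniteHarmonic φ₁ → FiniteHarmonic φ₂ →
    φ₁ cEmpty = 1 → φ₂ cEmpty = 1 →
    ∀ c₁ c₂ : ℝ, 0 < c₁ → 0 < c₂ → c₁ + c₂ = 1 →
      (∀ l, φ l = c₁ * φ₁ l + c₂ * φ₂ l) → φ = φ₁ ∨ φ = φ₂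

/-! ## Typed weight sequences, `M°_λ` and `U₀` -/

/-- `M°_λ(v)` for a typed weight sequence `v` (`true` = h, `false` = v): the sum over all
decompositions of `λ` into consecutive (possibly empty) blocks, one for each entry of `v`,
where an h-block has at most one part and contributes `w^{|block|}`, and a v-block has all
parts equal to 1 and contributes `w^{ℓ}/ℓ!`. -/
noncomputable def Mcirc : List (ℝ × Bool) → List ℕ → ℝ
  | [], l => if l = [] then 1 else 0
  | (w, t) :: v, l =>
      ∑ i ∈ Finset.range (l.length + 1),
        (if t then (if (l.take i).length ≤ 1 then w ^ (l.take i).sum else 0)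
         else if ∀ n ∈ l.take i, n = 1 then
           w ^ (l.take i).length / ((l.take i).length.factorial : ℝ)
         else 0) * Mcirc v (l.drop i)

/-- Membership in `U₀`: positive weights of total sum 1, no two consecutive v's. -/
def memU0 (u : List (ℝ × Bool)) : Prop :=
  (∀ p ∈ u, 0 < p.1) ∧ (u.map Prod.fst).sum = 1 ∧
    List.Chain' (fun p q => p.2 = true ∨ q.2 = true) u

/-- `t_n(u)`: replace each h-interval by a part `n` and each v-interval by `n` ones. -/
def tnU (u : List (ℝ × Bool)) (n : ℕ) : List ℕ :=
  (u.map fun p => if p.2 then [n] else List.replicate n 1).flatten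

/-- Merge each maximal run of consecutive v-intervals into a single v-interval,
summing the weights. -/
def mergeV : List (ℝ × Bool) → List (ℝ × Bool)
  | [] => []
  | (w, true) :: rest => (w, true) :: mergeV rest
  | (w, false) :: rest =>
      match mergeV rest with
      | (w', false) :: rest' => (w + w', false) :: rest'
      | r => (w, false) :: r

/-! ## The set `Ũ₀` and the functions `φ_ũ` -/

/-- An element of `Ũ₀`. `t i = true` means type h, `false` means type v; `sep i` are the
separating compositions λ₀, …, λ_m. Only `w i`, `t i` for `i < m` and `sep i` for `i ≤ m`
are relevant. -/
structure UTilde where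
  m : ℕ
  w : ℕ → ℝ
  t : ℕ → Bool
  sep : ℕ → List ℕ
  sep_pos : ∀ i, i ≤ m → ∀ n ∈ sep i, 0 < n
  sep_nonempty : ∃ i, i ≤ m ∧ sep i ≠ []
  w_pos : ∀ i, i < m → 0 < w i
  w_sum : ∑ i ∈ Finset.range m, w i = 1
  vv : ∀ i, i + 1 < m → t i = false → t (i + 1) = false → sep (i + 1) ≠ []
  v_left : ∀ i, i < m → t i = false → sep i ≠ [] → 2 ≤ (sep i).getLastD 0
  v_right : ∀ i, i < m → t i = false → sep (i + 1) ≠ [] → 2 ≤ (sep (i + 1)).headD 0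

namespace UTilde

variable (u : UTilde)

/-- `λ₀ ⊔ f 0 ⊔ λ₁ ⊔ … ⊔ f (m-1) ⊔ λ_m`. -/
def blocks (f : ℕ → List ℕ) : List ℕ :=
  u.sep 0 ++ (List.ofFn fun i : Fin u.m => f (i : ℕ) ++ u.sep ((i : ℕ) + 1)).flatten

/-- `t_n(ũ)`. -/
def tn (n : ℕ) : List ℕ :=
  u.blocks fun i => if u.t i then [n] else List.replicate n 1

/-- Membership in `GK_ũ`. -/
def GKmem (l : List ℕ) : Prop := ∃ n, 1 ≤ n ∧ Relation.ReflTransGen Rel l (u.tn n)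

/-- Position `i` (of type h) is adjacent to a v-interval. -/
def adj (i : ℕ) : Prop :=
  (0 < i ∧ u.t (i - 1) = false ∧ u.sep i = []) ∨
  (i + 1 < u.m ∧ u.t (i + 1) = false ∧ u.sep (i + 1) = [])

instance (i : ℕ) : Decidable (u.adj i) := by unfold adj; infer_instance

def d (i : ℕ) : ℕ := if u.adj i then 2 else 1

/-- `λ(a,b)`, where `c` encodes both vectors: `a i = c i` on h-positions and
`b i = c i` on v-positions. -/
def lam (c : ℕ → ℕ) : List ℕ :=
  u.blocks fun i => if u.t i then [u.d i + c i] else List.replicate (c i) 1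

/-- `λ_ũ = λ(0,0)`. -/
def lam0 : List ℕ := u.lam fun _ => 0

/-- `Π_{i : t_i = h} w_i^{a_i} · Π_{i : t_i = v} w_i^{b_i}/b_i!`. -/
noncomputable def phiVal (c : ℕ → ℕ) : ℝ≥0∞ :=
  ∏ i ∈ Finset.range u.m,
    if u.t i then ENNReal.ofReal (u.w i) ^ c i
    else ENNReal.ofReal (u.w i) ^ c i / ((c i).factorial : ℝ≥0∞)

open Classical in
/-- The semifinite harmonic function `φ_ũ`. -/
noncomputable def phi (l : List ℕ) : ℝ≥0∞ :=
  if h : ∃ c : ℕ → ℕ, l = u.lam c then u.phiVal h.choose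
  else if u.GKmem l then ⊤ else 0

/-- `u^ε(ũ)`: each part of each separating composition is replaced by an h-interval
of length `ε`. -/
def uEps (ε : ℝ) : List (ℝ × Bool) :=
  ((u.sep 0).map fun _ => (ε, true)) ++
    (List.ofFn fun i : Fin u.m =>
      (u.w (i : ℕ), u.t (i : ℕ)) :: ((u.sep ((i : ℕ) + 1)).map fun _ => (ε, true))).flatten

/-- `n(ũ) = |λ₀| + … + |λ_m|`. -/
def nU : ℕ := ∑ i ∈ Finset.range (u.m + 1), (u.sep i).sum

/-- The list of intervals of `ũ` (separating compositions dropped). -/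
def ubarList : List (ℝ × Bool) := List.ofFn fun i : Fin u.m => (u.w (i : ℕ), u.t (i : ℕ))

end UTilde

/-! ## The cone `K` and the maps `F_φ` -/

/-- `V`: finitely supported real functions on compositions. -/
abbrev V := Comp →₀ ℝ

/-- `W`: span of the vectors `e_λ − Σ_μ κ(λ,μ)·e_μ`. -/
noncomputable def Wsub : Submodule ℝ V :=
  Submodule.span ℝ
    {x : V | ∃ l : Comp, ∀ μ : Comp, x μ = (if μ = l then 1 else 0) - (kappa l.1 μ.1 : ℝ)}

/-- `R = V/W`. -/
abbrev Rq := V ⧸ Wsub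

/-- The cone `K ⊆ R`: classes of nonnegative vectors. -/
def Kcone : Set Rq :=
  {a | ∃ x : V, (∀ μ, 0 ≤ x μ) ∧ Submodule.Quotient.mk x = a}

/-- `Σ_λ x(λ)·φ(λ)` for a representative `x`. -/
noncomputable def FphiV (φ : Comp → ℝ≥0∞) (x : V) : ℝ≥0∞ :=
  ∑' μ : Comp, ENNReal.ofReal (x μ) * φ μ

open Classical in
/-- `F_φ : K → [0,∞]` (defined via a choice of nonnegative representative; for harmonic `φ`
it is well defined). Outside `K` we set it to `0`. -/
noncomputable def Fphi (φ : Comp → ℝ≥0∞) (a : Rq) : ℝ≥0∞ :=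
  if h : a ∈ Kcone then FphiV φ h.choose else 0

/-- Semifiniteness: not finite, and `F_φ` is determined by its finite values from below. -/
def Semifinite (φ : Comp → ℝ≥0∞) : Prop :=
  (¬ ∀ l, φ l < ⊤) ∧
    ∀ a ∈ Kcone, Fphi φ a =
      sSup {y | ∃ b ∈ Kcone, a - b ∈ Kcone ∧ Fphi φ b < ⊤ ∧ y = Fphi φ b}

/-- Indecomposability of a semifinite harmonic function. -/
def IndecSemifinite (φ : Comp → ℝ≥0∞) : Prop :=
  ∀ ψ : Comp → ℝ≥0∞, HarmonicE ψ →
    (((∀ l, ψ l < ⊤) ∧ ψ ≠ 0) ∨ Semifinite ψ) →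
    (∀ a ∈ Kcone, Fphi ψ a ≤ Fphi φ a) →
    ∃ c : ℝ≥0, ∀ l, ψ l = (c : ℝ≥0∞) * φ l

end GK

namespace GK

private lemma fin_len1_eq (i : Fin ([1] : List ℕ).length) : i = ⟨0, Nat.one_pos⟩ :=
  Fin.ext (Nat.lt_one_iff.mp i.isLt)

private lemma fin1_strictMono {α : Type*} [Preorder α] (f : Fin ([1] : List ℕ).length → α) :
    StrictMono f := fun a b h =>
  absurd ((fin_len1_eq a).trans (fin_len1_eq b).symm) h.ne

private lemma sum_ite_ne {k r : ℕ} {g : Fin k → Fin r} {v : Fin k → ℕ} {s : Fin r}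
    (h : ∀ j, g j ≠ s) : (∑ j, if g j = s then v j else 0) = 0 :=
  Finset.sum_eq_zero fun j _ => if_neg (h j)

private lemma sum_ite_single {k r : ℕ} {g : Fin k → Fin r} (hg : Function.Injective g)
    (v : Fin k → ℕ) {s : Fin r} {j₀ : Fin k} (h : g j₀ = s) :
    (∑ j, if g j = s then v j else 0) = v j₀ := by
  subst h
  rw [Finset.sum_eq_single_of_mem j₀ (Finset.mem_univ _) fun b _ hb => if_neg fun h => hb (hg h)]
  exact if_pos rfl

private lemma sum_len1 {r : ℕ} (f : Fin ([1] : List ℕ).length → Fin r) (s : Fin r) :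
    (∑ i, if f i = s then ([1] : List ℕ).get i else 0) =
      if f ⟨0, Nat.one_pos⟩ = s then 1 else 0 :=
  Fin.sum_univ_one (fun i : Fin 1 => if f i = s then ([1] : List ℕ).get i else 0)

/-- Structure lemma: any pair `(f, g)` counted by `qsCoeff [1] β γ` is determined by
`s₀ := f 0`, and `stepAt γ s₀ = β`. -/
private lemma qs_pair_structure {β γ : List ℕ} (hβ : ∀ n ∈ β, 0 < n)
    {f : Fin ([1] : List ℕ).length → Fin γ.length} {g : Fin β.length → Fin γ.length}
    (hg : StrictMono g)
    (hcov : ∀ s, (∃ i, f i = s) ∨ (∃ j, g j = s))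
    (hsum : ∀ s : Fin γ.length,
      γ.get s = (∑ i, if f i = s then ([1] : List ℕ).get i else 0) +
        (∑ j, if g j = s then β.get j else 0)) :
    stepAt γ (f ⟨0, Nat.one_pos⟩ : Fin γ.length).val = β ∧
    ∀ j : Fin β.length, (g j : ℕ) =
      if 2 ≤ γ.get (f ⟨0, Nat.one_pos⟩) then (j : ℕ)
      else if (j : ℕ) < ((f ⟨0, Nat.one_pos⟩ : Fin γ.length) : ℕ) then (j : ℕ)
        else (j : ℕ) + 1 := by
  classical
  set s₀ : Fin γ.length := f ⟨0, Nat.one_pos⟩ with hs₀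
  have hsum' : ∀ s : Fin γ.length, γ.get s = (if s₀ = s then 1 else 0) +
      (∑ j, if g j = s then β.get j else 0) := by
    intro s
    rw [hsum s, sum_len1]
  by_cases hA : ∃ j₀, g j₀ = s₀
  · -- decrement case: `s₀ ∈ range g`, `γ[s₀] ≥ 2`
    obtain ⟨j₀, hj₀⟩ := hA
    have hgsurj : Function.Surjective g := by
      intro s
      rcases hcov s with ⟨i, hi⟩ | h
      · refine ⟨j₀, ?_⟩
        rw [hj₀, hs₀, ← hi, fin_len1_eq i]
      · exact h
    have hkr : β.length = γ.length := by
      simpa using Fintype.card_of_bijective ⟨hg.injective, hgsurj⟩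
    have hcast : StrictMono (fun s : Fin γ.length =>
        (⟨(s : ℕ), by have := s.isLt; omega⟩ : Fin β.length)) := fun a b h => h
    have hid : (fun s : Fin γ.length => g ⟨(s : ℕ), by have := s.isLt; omega⟩) = id := by
      refine ((hg.comp hcast).range_inj strictMono_id).mp ?_
      rw [Set.range_id]
      refine Set.eq_univ_of_forall fun s => ?_
      obtain ⟨j, hj⟩ := hgsurj s
      exact ⟨⟨(j : ℕ), by have := j.isLt; omega⟩, by simpa using hj⟩
    have gval : ∀ j : Fin β.length, (g j : ℕ) = (j : ℕ) := by
      intro j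
      have h := congrFun hid ⟨(j : ℕ), by have := j.isLt; omega⟩
      simpa using congrArg Fin.val h
    have hβpos : 0 < β.get j₀ := hβ _ (List.getElem_mem j₀.isLt)
    have h2 : 2 ≤ γ.get s₀ := by
      have h := hsum' s₀
      rw [if_pos rfl, sum_ite_single hg.injective _ hj₀] at h
      omega
    have hget : ∀ s : Fin γ.length, γ.get s =
        (if s₀ = s then 1 else 0) + β.get ⟨(s : ℕ), by have := s.isLt; omega⟩ := by
      intro s
      have hgj : g ⟨(s : ℕ), by have := s.isLt; omega⟩ = s := Fin.ext (gval _)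
      rw [hsum' s, sum_ite_single hg.injective _ hgj]
    constructor
    · unfold stepAt
      rw [List.getD_eq_getElem γ 0 s₀.isLt,
        if_pos (show 2 ≤ γ[(s₀ : ℕ)] from (List.get_eq_getElem (l := γ) (i := s₀)) ▸ h2)]
      refine List.ext_getElem (by rw [List.length_set]; omega) fun i h1 h2' => ?_
      rw [List.getElem_set]
      have hik : i < β.length := h2'
      have hir : i < γ.length := by omega
      have hg1 := hget ⟨i, hir⟩
      have hg2 := hget s₀
      rw [if_pos rfl] at hg2
      simp only [List.get_eq_getElem] at hg1 hg2
      by_cases he : (s₀ : ℕ) = i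
      · rw [if_pos he]
        have heq : s₀ = (⟨i, hir⟩ : Fin γ.length) := Fin.ext he
        rw [if_pos heq] at hg1
        simp only [← he] at hg1 ⊢
        omega
      · rw [if_neg he]
        have hne : ¬ s₀ = (⟨i, hir⟩ : Fin γ.length) := fun h => he (congrArg Fin.val h)
        rw [if_neg hne] at hg1
        omega
    · intro j
      rw [if_pos h2]
      exact gval j
  · -- erase case: `s₀ ∉ range g`, `γ[s₀] = 1`
    have hinj : Function.Injective
        (Sum.elim g f : Fin β.length ⊕ Fin ([1] : List ℕ).length → Fin γ.length) := by
      rintro (a | a) (b | b) hab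
      · exact congrArg Sum.inl (hg.injective hab)
      · exact absurd ⟨a, hab.trans (by rw [fin_len1_eq b, ← hs₀] : f b = s₀)⟩ hA
      · exact absurd ⟨b, hab.symm.trans (by rw [fin_len1_eq a, ← hs₀] : f a = s₀)⟩ hA
      · rw [fin_len1_eq a, fin_len1_eq b]
    have hsurj : Function.Surjective
        (Sum.elim g f : Fin β.length ⊕ Fin ([1] : List ℕ).length → Fin γ.length) := by
      intro s
      rcases hcov s with ⟨i, hi⟩ | ⟨j, hj⟩
      · exact ⟨Sum.inr i, hi⟩
      · exact ⟨Sum.inl j, hj⟩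
    have hr : β.length + 1 = γ.length := by
      have h := Fintype.card_of_bijective ⟨hinj, hsurj⟩
      simpa using h
    have hs₀r : (s₀ : ℕ) < γ.length := s₀.isLt
    have hbound : ∀ j : Fin β.length,
        (if (j : ℕ) < (s₀ : ℕ) then (j : ℕ) else (j : ℕ) + 1) < γ.length := by
      intro j; have := j.isLt; split <;> omega
    have hgB : StrictMono (fun j : Fin β.length =>
        (⟨if (j : ℕ) < (s₀ : ℕ) then (j : ℕ) else (j : ℕ) + 1, hbound j⟩ : Fin γ.length)) := by
      intro a b hab
      have hab' : (a : ℕ) < (b : ℕ) := hab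
      simp only [Fin.lt_def]
      split <;> split <;> omega
    have hrange : Set.range g = Set.range (fun j : Fin β.length =>
        (⟨if (j : ℕ) < (s₀ : ℕ) then (j : ℕ) else (j : ℕ) + 1, hbound j⟩ : Fin γ.length)) := by
      ext s
      simp only [Set.mem_range]
      constructor
      · rintro ⟨j, rfl⟩
        have hne : g j ≠ s₀ := fun h => hA ⟨j, h⟩
        have hnev : (g j : ℕ) ≠ (s₀ : ℕ) := fun h => hne (Fin.ext h)
        by_cases hlt : (g j : ℕ) < (s₀ : ℕ)
        · exact ⟨⟨(g j : ℕ), by have := (g j).isLt; omega⟩,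
            Fin.ext (by simp only [if_pos hlt])⟩
        · refine ⟨⟨(g j : ℕ) - 1, by have := (g j).isLt; omega⟩, Fin.ext ?_⟩
          have h1 := (g j).isLt
          simp only
          split <;> omega
      · rintro ⟨j, rfl⟩
        have hne : (s₀ : ℕ) ≠ (if (j : ℕ) < (s₀ : ℕ) then (j : ℕ) else (j : ℕ) + 1) := by
          split <;> omega
        rcases hcov ⟨if (j : ℕ) < (s₀ : ℕ) then (j : ℕ) else (j : ℕ) + 1, hbound j⟩
          with ⟨i, hi⟩ | h
        · exfalso
          apply hne
          have heq : s₀ = (⟨_, hbound j⟩ : Fin γ.length) :=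
            (congrArg f (fin_len1_eq i)).symm.trans hi
          exact congrArg Fin.val heq
        · exact h
    have hgeq : g = fun j : Fin β.length =>
        (⟨if (j : ℕ) < (s₀ : ℕ) then (j : ℕ) else (j : ℕ) + 1, hbound j⟩ : Fin γ.length) :=
      (hg.range_inj hgB).mp hrange
    have gval : ∀ j : Fin β.length, (g j : ℕ) =
        if (j : ℕ) < (s₀ : ℕ) then (j : ℕ) else (j : ℕ) + 1 := by
      intro j; rw [hgeq]
    have h1 : γ.get s₀ = 1 := by
      have h := hsum' s₀
      rw [if_pos rfl, sum_ite_ne fun j hj => hA ⟨j, hj⟩] at h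
      omega
    have hget : ∀ j : Fin β.length, γ.get (g j) = β.get j := by
      intro j
      have h := hsum' (g j)
      rw [if_neg (fun he => hA ⟨j, he.symm⟩), sum_ite_single hg.injective _ rfl] at h
      omega
    constructor
    · unfold stepAt
      rw [List.getD_eq_getElem γ 0 s₀.isLt,
        if_neg (show ¬ 2 ≤ γ[(s₀ : ℕ)] by rw [← List.get_eq_getElem (l := γ) (i := s₀), h1]; omega)]
      refine List.ext_getElem (by rw [List.length_eraseIdx, if_pos hs₀r]; omega)
        fun i h1' h2' => ?_
      have hik : i < β.length := h2'
      by_cases hlt : i < (s₀ : ℕ)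
      · rw [List.getElem_eraseIdx_of_lt h1' hlt]
        have h := hget ⟨i, hik⟩
        rw [hgeq] at h
        simp only [List.get_eq_getElem, if_pos hlt] at h
        exact h
      · rw [List.getElem_eraseIdx_of_ge h1' (by omega)]
        have h := hget ⟨i, hik⟩
        rw [hgeq] at h
        simp only [List.get_eq_getElem, if_neg hlt] at h
        exact h
    · intro j
      rw [if_neg (by rw [h1]; omega)]
      exact gval j

/-- the Pieri rule for monomial quasisymmetric functions —
`c^μ_{(1),λ} = κ(λ,μ)` for all compositions `λ`, `μ`. -/
theorem qsCoeff_one_eq_kappa (l μ : Comp) :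
    qsCoeff [1] l.1 μ.1 = kappa l.1 μ.1 := by
  classical
  obtain ⟨β, hβ⟩ := l
  obtain ⟨γ, hγ⟩ := μ
  show qsCoeff [1] β γ = kappa β γ
  rw [qsCoeff, kappa, ← Nat.card_eq_finsetCard]
  refine Nat.card_congr (Equiv.ofBijective
    (fun x => ⟨((x.1.1 ⟨0, Nat.one_pos⟩ : Fin γ.length) : ℕ), ?_⟩) ⟨?_, ?_⟩)
  · -- membership
    obtain ⟨⟨f, g⟩, hf, hg, hcov, hsum⟩ := x
    rw [Finset.mem_filter, Finset.mem_range]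
    exact ⟨(f ⟨0, Nat.one_pos⟩).isLt, (qs_pair_structure hβ hg hcov hsum).1⟩
  · -- injectivity
    rintro ⟨⟨f₁, g₁⟩, hf₁, hg₁, hcov₁, hsum₁⟩ ⟨⟨f₂, g₂⟩, hf₂, hg₂, hcov₂, hsum₂⟩ h
    dsimp only at hf₁ hg₁ hcov₁ hsum₁ hf₂ hg₂ hcov₂ hsum₂
    simp only [Subtype.mk.injEq] at h
    have hf : f₁ ⟨0, Nat.one_pos⟩ = f₂ ⟨0, Nat.one_pos⟩ := Fin.ext h
    have hs₁ := (qs_pair_structure hβ hg₁ hcov₁ hsum₁).2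
    have hs₂ := (qs_pair_structure hβ hg₂ hcov₂ hsum₂).2
    refine Subtype.ext (Prod.ext ?_ ?_)
    · exact funext fun i => (fin_len1_eq i) ▸ hf
    · refine funext fun j => Fin.ext ?_
      show (g₁ j : ℕ) = (g₂ j : ℕ)
      have e1 := hs₁ j
      rw [hf] at e1
      rw [e1, hs₂ j]
  · -- surjectivity
    rintro ⟨p, hp⟩
    rw [Finset.mem_filter, Finset.mem_range] at hp
    obtain ⟨hpr, hstep⟩ := hp
    have hγp : 0 < γ[p] := hγ _ (List.getElem_mem hpr)
    have hgd : γ.getD p 0 = γ[p] := List.getD_eq_getElem γ 0 hpr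
    by_cases h2 : 2 ≤ γ[p]
    · -- decrement case
      have hβγ : β = γ.set p (γ[p] - 1) := by
        rw [← hstep]; unfold stepAt; rw [hgd, if_pos h2]
      have hk : β.length = γ.length := by rw [hβγ, List.length_set]
      have hginj : Function.Injective
          (fun j : Fin β.length => (⟨(j : ℕ), by have := j.isLt; omega⟩ : Fin γ.length)) := by
        intro a b hab
        exact Fin.ext (show (a : ℕ) = (b : ℕ) from
          congrArg (fun t : Fin γ.length => (t : ℕ)) hab)
      refine ⟨⟨⟨fun _ => ⟨p, hpr⟩, fun j => ⟨(j : ℕ), by have := j.isLt; omega⟩⟩,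
        fin1_strictMono _, fun a b hab => hab, ?_, ?_⟩, rfl⟩
      · intro s
        exact Or.inr ⟨⟨(s : ℕ), by have := s.isLt; omega⟩, Fin.ext rfl⟩
      · intro s
        have hsk : (s : ℕ) < β.length := by have := s.isLt; omega
        rw [sum_len1, sum_ite_single hginj _
          (show (⟨(s : ℕ), by have := s.isLt; omega⟩ : Fin γ.length) = s from Fin.ext rfl)
          (j₀ := ⟨(s : ℕ), hsk⟩)]
        simp only [List.get_eq_getElem]
        have hβs : β[(s : ℕ)]'hsk = if p = (s : ℕ) then γ[p] - 1 else γ[(s : ℕ)] := by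
          simp only [hβγ]
          rw [List.getElem_set]
        by_cases he : p = (s : ℕ)
        · rw [if_pos (Fin.ext he : (⟨p, hpr⟩ : Fin γ.length) = s), hβs, if_pos he]
          simp only [← he]
          omega
        · rw [if_neg (fun h : (⟨p, hpr⟩ : Fin γ.length) = s =>
              he (show p = (s : ℕ) from congrArg Fin.val h)),
            hβs, if_neg he]
          omega
    · -- erase case
      have hγp1 : γ[p] = 1 := by omega
      have hβγ : β = γ.eraseIdx p := by
        rw [← hstep]; unfold stepAt; rw [hgd, if_neg h2]
      have hk : β.length + 1 = γ.length := by
        rw [hβγ, List.length_eraseIdx, if_pos hpr]; omega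
      have hbound : ∀ j : Fin β.length,
          (if (j : ℕ) < p then (j : ℕ) else (j : ℕ) + 1) < γ.length := by
        intro j; have := j.isLt; split <;> omega
      have hgmono : StrictMono (fun j : Fin β.length =>
          (⟨if (j : ℕ) < p then (j : ℕ) else (j : ℕ) + 1, hbound j⟩ : Fin γ.length)) := by
        intro a b hab
        have hab' : (a : ℕ) < (b : ℕ) := hab
        simp only [Fin.lt_def]
        split <;> split <;> omega
      refine ⟨⟨⟨fun _ => ⟨p, hpr⟩,
        fun j => ⟨if (j : ℕ) < p then (j : ℕ) else (j : ℕ) + 1, hbound j⟩⟩,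
        fin1_strictMono _, hgmono, ?_, ?_⟩, rfl⟩
      · intro s
        rcases lt_trichotomy (s : ℕ) p with hlt | heq | hgt
        · exact Or.inr ⟨⟨(s : ℕ), by omega⟩, Fin.ext (by simp only [if_pos hlt])⟩
        · exact Or.inl ⟨⟨0, Nat.one_pos⟩, Fin.ext heq.symm⟩
        · refine Or.inr ⟨⟨(s : ℕ) - 1, by have := s.isLt; omega⟩, Fin.ext ?_⟩
          simp only
          rw [if_neg (by omega)]
          omega
      · intro s
        rw [sum_len1]
        simp only [List.get_eq_getElem]
        rcases lt_trichotomy (s : ℕ) p with hlt | heq | hgt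
        · have hsk : (s : ℕ) < β.length := by omega
          rw [if_neg (fun h : (⟨p, hpr⟩ : Fin γ.length) = s =>
              absurd (show p = (s : ℕ) from congrArg Fin.val h) (by omega)),
            sum_ite_single hgmono.injective _
              (show _ = s from Fin.ext (by simp only [if_pos hlt])) (j₀ := ⟨(s : ℕ), hsk⟩)]
          simp only [hβγ]
          rw [List.getElem_eraseIdx_of_lt (by rw [← hβγ]; exact hsk) hlt]
          omega
        · rw [if_pos (Fin.ext heq.symm : (⟨p, hpr⟩ : Fin γ.length) = s),
            sum_ite_ne (fun j h => by
              have hv : (if (j : ℕ) < p then (j : ℕ) else (j : ℕ) + 1) = (s : ℕ) :=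
                congrArg Fin.val h
              split at hv <;> omega)]
          simp only [← heq] at hγp1 ⊢
          omega
        · have hsk : (s : ℕ) - 1 < β.length := by have := s.isLt; omega
          rw [if_neg (fun h : (⟨p, hpr⟩ : Fin γ.length) = s =>
              absurd (show p = (s : ℕ) from congrArg Fin.val h) (by omega)),
            sum_ite_single hgmono.injective _
              (show _ = s from Fin.ext (by
                simp only
                rw [if_neg (by omega)]
                omega)) (j₀ := ⟨(s : ℕ) - 1, hsk⟩)]
          simp only [hβγ]
          rw [List.getElem_eraseIdx_of_ge (by rw [← hβγ]; exact hsk) (by omega)]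
          simp only [Nat.sub_add_cancel (show 1 ≤ (s : ℕ) by omega)]
          omega

end GK
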